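/- arXiv:2310.20179 — 3 statements merged into one kernel-verified Lean document; each statement's English description precedes it below -/
import Mathlib

section
/- Let s ≥ 1 be an integer, q = 2^s, m ≥ 2 an even integer, and n = q^m − 1. Then for each j ∈ {0,1} and every integer i with 1 ≤ i ≤ n−1, i ∈ T_{(q,m;j)} if and only if n−i ∈ T_{(q,m;j)} (so −T_{(q,m;j)} = T_{(q,m;j)} modulo n); furthermore |T_{(q,m;0)}| = (n−3)/2 and |T_{(q,m;1)}| = (n+1)/2. -/
/-- The `q`-weight of a nonnegative integer: the sum of its base-`q` digits. -/
def qWeight (q i : ℕ) : ℕ := (Nat.digits q i).sum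

/-- The set `T_{(q,m;j)} = {i : 1 ≤ i ≤ q^m − 2, wt_q(i) ≡ j (mod 2)}` as a finset. -/
def Tset (q m j : ℕ) : Finset ℕ :=
  (Finset.Icc 1 (q ^ m - 2)).filter fun i => qWeight q i % 2 = j


lemma qWeight_rec (q : ℕ) (hq : 2 ≤ q) (i : ℕ) :
    qWeight q i = i % q + qWeight q (i / q) := by
  rcases Nat.eq_zero_or_pos i with h | h
  · simp [h, qWeight]
  · unfold qWeight
    rw [Nat.digits_def' hq h, List.sum_cons]

lemma qWeight_compl (q : ℕ) (hq : 2 ≤ q) :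
    ∀ m i, i ≤ q ^ m - 1 →
      qWeight q i + qWeight q (q ^ m - 1 - i) = m * (q - 1) := by
  intro m
  induction m with
  | zero => intro i hi; simp at hi; simp [hi, qWeight]
  | succ m ih =>
    intro i hi
    have hq0 : 0 < q := by omega
    have hqm : 1 ≤ q ^ m := Nat.one_le_pow _ _ hq0
    have hqm1 : 1 ≤ q ^ (m + 1) := Nat.one_le_pow _ _ hq0
    set a := i / q with ha
    set b := i % q with hb
    have hdm : q * a + b = i := Nat.div_add_mod i q
    have hblt : b < q := Nat.mod_lt _ hq0
    have hi2 : i < q ^ m * q := by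
      have h0 : i < q ^ (m + 1) := by omega
      rwa [pow_succ] at h0
    have halt : a ≤ q ^ m - 1 := by
      have := (Nat.div_lt_iff_lt_mul hq0).2 hi2
      omega
    set c := q ^ m - 1 - a with hc
    set d := q - 1 - b with hd
    have hac : a + c + 1 = q ^ m := by omega
    have hbd : b + d + 1 = q := by omega
    have hdlt : d < q := by omega
    have h1 : q * c + d + i + 1 = q ^ (m + 1) := by
      have hac'' : (a : ℤ) + c + 1 = (q : ℤ) ^ m := by exact_mod_cast hac
      have hbd'' : (b : ℤ) + d + 1 = (q : ℤ) := by exact_mod_cast hbd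
      have hdm'' : (q : ℤ) * a + b = i := by exact_mod_cast hdm
      have hpow'' : (q : ℤ) ^ (m + 1) = (q : ℤ) ^ m * q := by ring
      zify
      linear_combination (q : ℤ) * hac'' + hbd'' - hpow'' - hdm''
    have hkey : q ^ (m + 1) - 1 - i = q * c + d := by omega
    rw [hkey, qWeight_rec q hq i, qWeight_rec q hq (q * c + d)]
    have h2 : (q * c + d) % q = d := by
      rw [Nat.mul_add_mod, Nat.mod_eq_of_lt hdlt]
    have h3 : (q * c + d) / q = c := by
      rw [Nat.mul_add_div hq0, Nat.div_eq_of_lt hdlt, Nat.add_zero]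
    rw [h2, h3, ← hb, ← ha]
    have hih := ih a halt
    rw [← hc] at hih
    have hmul : (m + 1) * (q - 1) = m * (q - 1) + (q - 1) := by ring
    omega

lemma qWeight_succ_even (q : ℕ) (hq2 : 2 ≤ q) (hqe : q % 2 = 0) (i : ℕ) (hi : i % 2 = 0) :
    qWeight q (i + 1) = qWeight q i + 1 := by
  have hq0 : 0 < q := by omega
  have hbq : i % q % 2 = i % 2 := Nat.mod_mod_of_dvd i (by omega)
  set b := i % q with hb
  have hblt : b < q := Nat.mod_lt _ hq0
  have hb1 : b + 1 < q := by omega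
  have hdm : q * (i / q) + b = i := Nat.div_add_mod i q
  have hrepr : i + 1 = q * (i / q) + (b + 1) := by omega
  have h2 : (i + 1) % q = b + 1 := by
    rw [hrepr, Nat.mul_add_mod, Nat.mod_eq_of_lt hb1]
  have h3 : (i + 1) / q = i / q := by
    rw [hrepr, Nat.mul_add_div hq0, Nat.div_eq_of_lt hb1, Nat.add_zero]
  rw [qWeight_rec q hq2 (i + 1), qWeight_rec q hq2 i, h2, h3, ← hb]
  omega

lemma card_parity_eq (q : ℕ) (hq2 : 2 ≤ q) (hqe : q % 2 = 0) (M : ℕ) (hM : 1 ≤ M) :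
    ((Finset.range (q ^ M)).filter fun i => qWeight q i % 2 = 0).card =
    ((Finset.range (q ^ M)).filter fun i => qWeight q i % 2 = 1).card := by
  have hQe : q ^ M % 2 = 0 := by
    rw [Nat.pow_mod, hqe, Nat.zero_pow (by omega : 0 < M), Nat.zero_mod]
  refine Finset.card_bij' (fun a _ => if a % 2 = 0 then a + 1 else a - 1)
      (fun a _ => if a % 2 = 0 then a + 1 else a - 1) ?_ ?_ ?_ ?_
  · intro a ha
    simp only [Finset.mem_filter, Finset.mem_range] at ha ⊢
    by_cases h2a : a % 2 = 0
    · rw [if_pos h2a]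
      have hw := qWeight_succ_even q hq2 hqe a h2a
      exact ⟨by omega, by omega⟩
    · rw [if_neg h2a]
      have ha1 : 1 ≤ a := by omega
      have hw := qWeight_succ_even q hq2 hqe (a - 1) (by omega)
      rw [Nat.sub_add_cancel ha1] at hw
      exact ⟨by omega, by omega⟩
  · intro a ha
    simp only [Finset.mem_filter, Finset.mem_range] at ha ⊢
    by_cases h2a : a % 2 = 0
    · rw [if_pos h2a]
      have hw := qWeight_succ_even q hq2 hqe a h2a
      exact ⟨by omega, by omega⟩
    · rw [if_neg h2a]
      have ha1 : 1 ≤ a := by omega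
      have hw := qWeight_succ_even q hq2 hqe (a - 1) (by omega)
      rw [Nat.sub_add_cancel ha1] at hw
      exact ⟨by omega, by omega⟩
  · intro a ha
    rcases Nat.even_or_odd a with he | ho
    · have ha2 : a % 2 = 0 := Nat.even_iff.mp he
      simp [ha2, Nat.add_mod]
    · have ha2 : a % 2 = 1 := Nat.odd_iff.mp ho
      have ha1 : 1 ≤ a := by omega
      have : (a - 1) % 2 = 0 := by omega
      simp [ha2, this, Nat.sub_add_cancel ha1]
  · intro a ha
    rcases Nat.even_or_odd a with he | ho
    · have ha2 : a % 2 = 0 := Nat.even_iff.mp he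
      simp [ha2, Nat.add_mod]
    · have ha2 : a % 2 = 1 := Nat.odd_iff.mp ho
      have ha1 : 1 ≤ a := by omega
      have : (a - 1) % 2 = 0 := by omega
      simp [ha2, this, Nat.sub_add_cancel ha1]

theorem stmt1 (s q m n : ℕ) (hs : 1 ≤ s) (hq : q = 2 ^ s)
    (hm : 2 ≤ m) (hmeven : Even m) (hn : n = q ^ m - 1) :
    (∀ j : ℕ, j = 0 ∨ j = 1 →
      ∀ i : ℕ, 1 ≤ i → i ≤ n - 1 → (i ∈ Tset q m j ↔ n - i ∈ Tset q m j)) ∧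
      (Tset q m 0).card = (n - 3) / 2 ∧ (Tset q m 1).card = (n + 1) / 2 := by
  classical
  have hq2 : 2 ≤ q := by
    rw [hq]
    calc 2 = 2 ^ 1 := rfl
    _ ≤ 2 ^ s := Nat.pow_le_pow_right (by norm_num) hs
  have hqe : q % 2 = 0 := by
    rw [hq, Nat.pow_mod]
    simp [Nat.zero_pow (show 0 < s by omega)]
  have hQ4 : 4 ≤ q ^ m := by
    calc 4 = 2 ^ 2 := rfl
    _ ≤ q ^ 2 := Nat.pow_le_pow_left hq2 2
    _ ≤ q ^ m := Nat.pow_le_pow_right (by omega) hm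
  have hQe : q ^ m % 2 = 0 := by
    rw [Nat.pow_mod, hqe, Nat.zero_pow (show 0 < m by omega), Nat.zero_mod]
  have hw0 : qWeight q 0 = 0 := by simp [qWeight]
  have hmq : m * (q - 1) % 2 = 0 := Nat.even_iff.mp (hmeven.mul_right _)
  have hwt_top : qWeight q (q ^ m - 1) % 2 = 0 := by
    have h := qWeight_compl q hq2 m 0 (by omega)
    rw [hw0, Nat.sub_zero, Nat.zero_add] at h
    omega
  subst hn
  refine ⟨?_, ?_, ?_⟩
  · intro j hj i h1 h2
    have hcomp := qWeight_compl q hq2 m i (by omega)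
    simp only [Tset, Finset.mem_filter, Finset.mem_Icc]
    omega
  · -- card Tset 0
    set E := (Finset.range (q ^ m)).filter (fun i => qWeight q i % 2 = 0) with hE
    have hsplit : E.card + ((Finset.range (q ^ m)).filter
        (fun i => qWeight q i % 2 = 1)).card = q ^ m := by
      rw [hE]
      have hfn : (Finset.range (q ^ m)).filter (fun a => ¬ qWeight q a % 2 = 0)
          = (Finset.range (q ^ m)).filter (fun i => qWeight q i % 2 = 1) := by
        apply Finset.filter_congr
        intro x _
        omega
      have h := Finset.card_filter_add_card_filter_not
        (s := Finset.range (q ^ m)) (p := fun i => qWeight q i % 2 = 0)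
      rw [hfn, Finset.card_range] at h
      exact h
    have hcard := card_parity_eq q hq2 hqe m (by omega)
    rw [← hE] at hcard
    have hEcard : E.card = q ^ m / 2 := by omega
    have hT0 : Tset q m 0 = E \ {0, q ^ m - 1} := by
      ext x
      simp only [Tset, Finset.mem_filter, Finset.mem_Icc, hE, Finset.mem_sdiff,
        Finset.mem_range, Finset.mem_insert, Finset.mem_singleton]
      constructor
      · rintro ⟨⟨hx1, hx2⟩, hx3⟩
        exact ⟨⟨by omega, hx3⟩, by omega⟩
      · rintro ⟨⟨hx1, hx3⟩, hx4⟩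
        refine ⟨⟨by omega, by omega⟩, hx3⟩
    rw [hT0, Finset.card_sdiff_of_subset]
    · rw [hEcard]
      have h2 : ({0, q ^ m - 1} : Finset ℕ).card = 2 := by
        rw [Finset.card_insert_of_notMem (by simp; omega), Finset.card_singleton]
      rw [h2]
      omega
    · intro x hx
      simp only [Finset.mem_insert, Finset.mem_singleton] at hx
      simp only [hE, Finset.mem_filter, Finset.mem_range]
      rcases hx with rfl | rfl
      · exact ⟨by omega, by rw [hw0]⟩
      · exact ⟨by omega, hwt_top⟩
  · -- card Tset 1
    set O := (Finset.range (q ^ m)).filter (fun i => qWeight q i % 2 = 1) with hO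
    have hsplit : ((Finset.range (q ^ m)).filter
        (fun i => qWeight q i % 2 = 0)).card + O.card = q ^ m := by
      rw [hO]
      have hfn : (Finset.range (q ^ m)).filter (fun a => ¬ qWeight q a % 2 = 0)
          = (Finset.range (q ^ m)).filter (fun i => qWeight q i % 2 = 1) := by
        apply Finset.filter_congr
        intro x _
        omega
      have h := Finset.card_filter_add_card_filter_not
        (s := Finset.range (q ^ m)) (p := fun i => qWeight q i % 2 = 0)
      rw [hfn, Finset.card_range] at h
      exact h
    have hcard := card_parity_eq q hq2 hqe m (by omega)
    rw [← hO] at hcard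
    have hOcard : O.card = q ^ m / 2 := by omega
    have hT1 : Tset q m 1 = O := by
      ext x
      simp only [Tset, Finset.mem_filter, Finset.mem_Icc, hO, Finset.mem_range]
      constructor
      · rintro ⟨⟨hx1, hx2⟩, hx3⟩
        exact ⟨by omega, hx3⟩
      · rintro ⟨hx1, hx3⟩
        refine ⟨⟨?_, ?_⟩, hx3⟩
        · rcases Nat.eq_zero_or_pos x with rfl | h
          · rw [hw0] at hx3; omega
          · exact h
        · by_contra hcon
          have : x = q ^ m - 1 := by omega
          rw [this] at hx3
          omega
    rw [hT1, hOcard]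
    omega
end

section
/- Let m ≥ 2, let q ≥ 3 be an integer, let A be an integer with 2 ≤ A ≤ q−1, and let h be an integer with 0 ≤ h ≤ m−1. Then for every integer i with 0 ≤ i ≤ A·q^h − 1, wt_q(A·q^h − 1 − i) = (q−1)h + A − 1 − wt_q(i). -/
lemma qWeight_lt (q n : ℕ) (h : n < q) : qWeight q n = n := by
  rcases Nat.eq_zero_or_pos n with h0 | h0
  · simp [qWeight, h0]
  · have hq : 1 < q := by omega
    unfold qWeight
    rw [Nat.digits_def' hq h0, Nat.mod_eq_of_lt h, Nat.div_eq_of_lt h]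
    simp

lemma qWeight_step (q a b : ℕ) (hq : 2 ≤ q) (hb : b < q) :
    qWeight q (q * a + b) = b + qWeight q a := by
  rcases Nat.eq_zero_or_pos (q * a + b) with h0 | h0
  · have ha : a = 0 := by
      rcases Nat.eq_zero_or_pos a with h | h
      · exact h
      · exfalso; have := Nat.le_mul_of_pos_right q h; omega
    have hb0 : b = 0 := by omega
    simp [ha, hb0, qWeight]
  · unfold qWeight
    rw [Nat.digits_def' (by omega : 1 < q) h0]
    have hmod : (q * a + b) % q = b := by
      rw [Nat.mul_add_mod, Nat.mod_eq_of_lt hb]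
    have hdiv : (q * a + b) / q = a := by
      rw [Nat.mul_add_div (by omega : 0 < q), Nat.div_eq_of_lt hb, Nat.add_zero]
    rw [hmod, hdiv]
    simp

lemma key (q A : ℕ) (hq : 3 ≤ q) (hA1 : 1 ≤ A) (hA2 : A ≤ q - 1) :
    ∀ h : ℕ, ∀ i : ℕ, i ≤ A * q ^ h - 1 →
      qWeight q (A * q ^ h - 1 - i) + qWeight q i = (q - 1) * h + (A - 1) := by
  intro h
  induction h with
  | zero =>
      intro i hi
      simp only [pow_zero, mul_one] at hi
      have h1 : i < q := by omega
      have h2 : A - 1 - i < q := by omega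
      rw [pow_zero, mul_one, qWeight_lt q i h1, qWeight_lt q _ h2]
      omega
  | succ n ih =>
      intro i hi
      have hpos : 0 < A * q ^ n := Nat.mul_pos (by omega) (pow_pos (by omega) n)
      have hNM : A * q ^ (n + 1) = q * (A * q ^ n) := by ring
      rw [hNM] at hi ⊢
      have hih' := ih
      obtain ⟨M, hMdef⟩ : ∃ M, A * q ^ n = M := ⟨_, rfl⟩
      rw [hMdef] at hi hpos hih' ⊢
      obtain ⟨j, r, hij, hrq⟩ : ∃ j r, i = q * j + r ∧ r < q :=
        ⟨i / q, i % q, (Nat.div_add_mod i q).symm, Nat.mod_lt _ (by omega)⟩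
      have hjM : j ≤ M - 1 := by
        by_contra hcon
        have hjM' : M ≤ j := by omega
        have : q * M ≤ q * j := Nat.mul_le_mul_left q hjM'
        have hqM : 0 < q * M := Nat.mul_pos (by omega) hpos
        omega
      have e1 : q * M = q * j + q * (M - 1 - j) + q := by
        have hMeq : M = j + (M - 1 - j) + 1 := by omega
        calc q * M = q * (j + (M - 1 - j) + 1) := by rw [← hMeq]
          _ = q * j + q * (M - 1 - j) + q := by ring
      have hkey : q * M - 1 - i = q * (M - 1 - j) + (q - 1 - r) := by omega
      rw [hkey, hij, qWeight_step q (M - 1 - j) (q - 1 - r) (by omega) (by omega),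
        qWeight_step q j r (by omega) hrq]
      have hih := hih' j hjM
      have hmul : (q - 1) * (n + 1) = (q - 1) * n + (q - 1) := by ring
      omega

theorem stmt3 (q m A h : ℕ) (hm : 2 ≤ m) (hq : 3 ≤ q)
    (hA1 : 2 ≤ A) (hA2 : A ≤ q - 1) (hh : h ≤ m - 1) :
    ∀ i : ℕ, i ≤ A * q ^ h - 1 →
      qWeight q (A * q ^ h - 1 - i) = (q - 1) * h + A - 1 - qWeight q i := by
  intro i hi
  have hk := key q A hq (by omega) hA2 h i hi
  omega
end

section
/- Let s ≥ 2 be an integer, q = 2^s, m an integer with m ≡ 2 (mod 4) and m ≥ 10, and n = q^m − 1. Let b = q^{m−1} + q^{m−2} and a = q^{(m−2)/2} + 1. Then gcd(a, n) = 1, and for every integer i with −(q−1) ≤ i ≤ q^{(m−2)/2} + q − 2, the residue (b + a·i) mod n belongs to T_{(q,m;0)}. -/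
lemma wt_lt {q x : ℕ} (hq : 2 ≤ q) (hx : x < q) : qWeight q x = x := by
  rcases Nat.eq_zero_or_pos x with rfl | hx0
  · simp [qWeight]
  · unfold qWeight
    rw [Nat.digits_def' (by omega : 1 < q) hx0, Nat.mod_eq_of_lt hx,
      Nat.div_eq_of_lt hx]
    simp

lemma wt_add_pow_mul {q : ℕ} (hq : 2 ≤ q) {x : ℕ} (k y : ℕ) (hx : x < q ^ k) :
    qWeight q (x + q ^ k * y) = qWeight q x + qWeight q y := by
  rcases Nat.eq_zero_or_pos y with rfl | hy
  · simp [qWeight]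
  have hlen : (Nat.digits q x).length ≤ k := by
    by_contra hcon
    push_neg at hcon
    have hx0 : x ≠ 0 := by
      rintro rfl; simp at hcon
    have h1 : q ^ (Nat.digits q x).length ≤ q * x :=
      Nat.base_pow_length_digits_le q x (by omega) hx0
    have h2 : q ^ (k + 1) ≤ q ^ (Nat.digits q x).length :=
      Nat.pow_le_pow_right (by omega) (by omega)
    have h3 : q * x < q * q ^ k :=
      Nat.mul_lt_mul_of_le_of_lt (le_refl q) hx (by omega)
    rw [← pow_succ'] at h3
    omega
  have hk : (Nat.digits q x).length + (k - (Nat.digits q x).length) = k := by omega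
  have hdig := Nat.digits_append_zeroes_append_digits
    (b := q) (k := k - (Nat.digits q x).length) (m := y) (n := x) (by omega) hy
  rw [hk] at hdig
  unfold qWeight
  rw [← hdig]
  simp

lemma wt_pred {q x : ℕ} (hq : 2 ≤ q) (hx : 0 < x) (hmod : x % q ≠ 0) :
    qWeight q x = qWeight q (x - 1) + 1 := by
  have hmd := Nat.mod_add_div x q
  have e1 : x = x % q + q ^ 1 * (x / q) := by
    rw [pow_one]; omega
  have e2 : x - 1 = (x % q - 1) + q ^ 1 * (x / q) := by
    rw [pow_one]; omega
  have hlt : x % q < q := Nat.mod_lt _ (by omega)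
  conv_lhs => rw [e1]
  rw [e2, wt_add_pow_mul hq 1 (x / q) (by rw [pow_one]; exact hlt),
    wt_add_pow_mul hq 1 (x / q) (by rw [pow_one]; omega),
    wt_lt hq hlt, wt_lt hq (by omega : x % q - 1 < q)]
  omega

lemma wt_two_digits {q : ℕ} (hq : 2 ≤ q) {x c d : ℕ} (hx : x = c + q * d)
    (hc : c < q) (hd : d < q) : qWeight q x = c + d := by
  subst hx
  have e : c + q * d = c + q ^ 1 * d := by rw [pow_one]
  rw [e, wt_add_pow_mul hq 1 d (by rw [pow_one]; exact hc), wt_lt hq hc, wt_lt hq hd]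

theorem stmt6 (s q m n : ℕ) (hs : 2 ≤ s) (hq : q = 2 ^ s)
    (hm : 10 ≤ m) (hmod4 : m % 4 = 2) (hn : n = q ^ m - 1)
    (b a : ℤ) (hb : b = (q : ℤ) ^ (m - 1) + (q : ℤ) ^ (m - 2))
    (ha : a = (q : ℤ) ^ ((m - 2) / 2) + 1) :
    Int.gcd a (n : ℤ) = 1 ∧
      ∀ i : ℤ, -((q : ℤ) - 1) ≤ i → i ≤ (q : ℤ) ^ ((m - 2) / 2) + (q : ℤ) - 2 →
        ((b + a * i) % (n : ℤ)).toNat ∈ Tset q m 0 := by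
  have hq4 : 4 ≤ q := by
    rw [hq]
    calc (4 : ℕ) = 2 ^ 2 := by norm_num
    _ ≤ 2 ^ s := Nat.pow_le_pow_right (by norm_num) hs
  have hq2 : 2 ≤ q := by omega
  set h : ℕ := (m - 2) / 2 with hh
  have hm2 : m - 2 = 2 * h := by omega
  have hm1 : m - 1 = 2 * h + 1 := by omega
  have hmeq : m = 2 * h + 2 := by omega
  have hh4 : 4 ≤ h := by omega
  have hhe : h % 2 = 0 := by omega
  have hH1 : 1 ≤ q ^ h := Nat.one_le_pow _ _ (by omega)
  have hHq : q ≤ q ^ h := by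
    calc q = q ^ 1 := (pow_one q).symm
    _ ≤ q ^ h := Nat.pow_le_pow_right (by omega) (by omega)
  have hqm : q ^ m = q ^ h * q ^ h * q * q := by
    rw [hmeq, show 2 * h + 2 = h + h + 1 + 1 by ring, pow_add, pow_add, pow_add]
    ring
  have hn1 : 1 ≤ n := by
    rw [hn]
    have : q ^ 1 ≤ q ^ m := Nat.pow_le_pow_right (by omega) (by omega)
    rw [pow_one] at this
    omega
  -- uniform upper bound fact
  have hkey : q ^ h + 3 * (q ^ h * q ^ h) + q ^ h * q ^ h * q + 2 ≤ q ^ h * q ^ h * q * q := by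
    have s1 : q ^ h * q ^ h * q * 4 ≤ q ^ h * q ^ h * q * q :=
      Nat.mul_le_mul_left _ hq4
    have s2 : q ^ h * q ^ h * 4 ≤ q ^ h * q ^ h * q :=
      Nat.mul_le_mul_left _ hq4
    have s3 : q ^ h ≤ q ^ h * q ^ h := Nat.le_mul_of_pos_right _ (by omega)
    omega
  constructor
  · -- gcd part
    have haN : a = ((q ^ h + 1 : ℕ) : ℤ) := by
      rw [ha]; push_cast; ring
    rw [haN, Int.gcd_natCast_natCast]
    set g := Nat.gcd (q ^ h + 1) n with hg
    have hga : g ∣ q ^ h + 1 := Nat.gcd_dvd_left _ _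
    have hgn : g ∣ n := Nat.gcd_dvd_right _ _
    have hd1 : q ^ h + 1 ∣ q ^ (2 * h) - 1 := by
      refine ⟨q ^ h - 1, ?_⟩
      obtain ⟨v, hv⟩ : ∃ v, q ^ h = v + 1 := ⟨q ^ h - 1, by omega⟩
      have e1 : q ^ (2 * h) = (v + 1) * (v + 1) := by
        rw [show 2 * h = h + h by ring, pow_add, hv]
      rw [e1, hv]
      have e2 : (v + 1 + 1) * (v + 1 - 1) = v * v + 2 * v := by
        simp
        ring
      have e3 : (v + 1) * (v + 1) = v * v + 2 * v + 1 := by ring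
      omega
    have hg2h : g ∣ q ^ (2 * h) - 1 := hga.trans hd1
    have hgq2 : g ∣ q * q - 1 := by
      have hkey2 : q * q - 1 = n - q * q * (q ^ (2 * h) - 1) := by
        rw [hn, hqm]
        obtain ⟨w, hw⟩ : ∃ w, q ^ (2 * h) = w + 1 := ⟨q ^ (2 * h) - 1, by
          have : 1 ≤ q ^ (2 * h) := Nat.one_le_pow _ _ (by omega)
          omega⟩
        have e1 : q ^ h * q ^ h = w + 1 := by
          rw [← hw, show 2 * h = h + h by ring, pow_add]
        have e2 : q * q * (q ^ (2 * h) - 1) = q * q * w := by rw [hw]; simp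
        have e3 : q ^ h * q ^ h * q * q = q * q * w + q * q := by
          rw [mul_assoc, mul_comm (q ^ h * q ^ h) (q * q), e1]
          ring
        rw [e2, e3]
        omega
      rw [hkey2]
      exact Nat.dvd_sub hgn (Dvd.dvd.mul_left hg2h (q * q))
    have hd2 : q * q - 1 ∣ q ^ h - 1 := by
      have hdd := Nat.sub_dvd_pow_sub_pow (q * q) 1 (h / 2)
      simp only [one_pow] at hdd
      have e : (q * q) ^ (h / 2) = q ^ h := by
        rw [← pow_two, ← pow_mul]
        congr 1
        omega
      rwa [e] at hdd
    have hgh1 : g ∣ q ^ h - 1 := hgq2.trans hd2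
    have hg2 : g ∣ 2 := by
      have hsub := Nat.dvd_sub hga hgh1
      have e : q ^ h + 1 - (q ^ h - 1) = 2 := by omega
      rwa [e] at hsub
    have hqdvd : 2 ∣ q ^ h := dvd_pow (by rw [hq]; exact dvd_pow_self 2 (by omega)) (by omega)
    rcases (Nat.dvd_prime Nat.prime_two).mp hg2 with hg1 | hg1
    · exact hg1
    · exfalso
      rw [hg1] at hga
      omega
  · -- membership part
    intro i hi1 hi2
    have key : ∀ N : ℕ, b + a * i = (N : ℤ) → 1 ≤ N →
        N ≤ q ^ h + q ^ h * (3 * q ^ h + q ^ h * q) →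
        qWeight q N % 2 = 0 → ((b + a * i) % (n : ℤ)).toNat ∈ Tset q m 0 := by
      intro N hN hN1 hN2 hw
      have hexp : q ^ h * (3 * q ^ h + q ^ h * q) =
          3 * (q ^ h * q ^ h) + q ^ h * q ^ h * q := by ring
      have hN2' : N ≤ q ^ m - 2 := by
        rw [hqm]
        rw [hexp] at hN2
        omega
      have hNn : (N : ℤ) < (n : ℤ) := by
        have : N < n := by omega
        exact_mod_cast this
      rw [hN, Int.emod_eq_of_lt (by positivity) hNn, Int.toNat_natCast]
      simp only [Tset, Finset.mem_filter, Finset.mem_Icc]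
      exact ⟨⟨hN1, hN2'⟩, hw⟩
    have hq1 : qWeight q 1 = 1 := wt_lt hq2 (by omega)
    rcases lt_trichotomy i 0 with hineg | hizero | hipos
    · -- negative case : i = -t, 1 ≤ t ≤ q - 1
      set t : ℕ := (-i).toNat with ht
      have hti : i = -(t : ℤ) := by
        rw [ht]; omega
      have ht1 : 1 ≤ t := by omega
      have htq : t ≤ q - 1 := by
        have : (t : ℤ) ≤ (q : ℤ) - 1 := by omega
        omega
      have htH : t + 1 ≤ q ^ h := by omega
      set N : ℕ := (q ^ h - t) + q ^ h * ((q ^ h - t - 1) + q ^ h * q) with hNdef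
      apply key N
      · rw [hb, ha, hm1, hm2, hti, hNdef]
        push_cast [Nat.cast_sub (show t ≤ q ^ h by omega),
          Nat.cast_sub (show 1 ≤ q ^ h - t by omega)]
        rw [show (2 * h + 1) = h + h + 1 by ring, show (2 * h) = h + h by ring]
        ring
      · have h0 : 0 < q ^ h * (q ^ h * q) := by positivity
        have h1 : q ^ h * (q ^ h * q) ≤ q ^ h * ((q ^ h - t - 1) + q ^ h * q) :=
          Nat.mul_le_mul_left _ (by omega)
        omega
      · have hz : (q ^ h - t - 1) + q ^ h * q ≤ 3 * q ^ h + q ^ h * q := by omega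
        have h1 : q ^ h * ((q ^ h - t - 1) + q ^ h * q) ≤ q ^ h * (3 * q ^ h + q ^ h * q) :=
          Nat.mul_le_mul_left _ hz
        rw [hNdef]
        omega
      · -- weight
        have hxq : q ^ h - t < q ^ h := by omega
        have hzq : q ^ h - t - 1 < q ^ h := by omega
        rw [hNdef, wt_add_pow_mul hq2 h _ hxq, wt_add_pow_mul hq2 h q hzq]
        have hwq : qWeight q q = 1 := by
          simpa using wt_two_digits hq2 (show q = 0 + q * 1 by ring) (by omega) (by omega)
        have hxmod : (q ^ h - t) % q ≠ 0 := by
          intro h0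
          have hd : q ∣ q ^ h - t := Nat.dvd_of_mod_eq_zero h0
          have hd2 : q ∣ q ^ h := dvd_pow_self q (by omega)
          have hdt : q ∣ t := by
            have hsub := Nat.dvd_sub hd2 hd
            have e : q ^ h - (q ^ h - t) = t := by omega
            rwa [e] at hsub
          have := Nat.le_of_dvd (by omega) hdt
          omega
        have hpred := wt_pred hq2 (show 0 < q ^ h - t by omega) hxmod
        rw [hwq]
        omega
    · -- i = 0
      set N : ℕ := 0 + q ^ h * (0 + q ^ h * (q + 1)) with hNdef
      apply key N
      · rw [hb, hm1, hm2, hizero, hNdef]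
        push_cast
        rw [show (2 * h + 1) = h + h + 1 by ring, show (2 * h) = h + h by ring]
        ring
      · have h0 : 0 < q ^ h * (0 + q ^ h * (q + 1)) := by positivity
        omega
      · have hz : 0 + q ^ h * (q + 1) ≤ 3 * q ^ h + q ^ h * q := by
          have e : q ^ h * (q + 1) = q ^ h * q + q ^ h := by ring
          omega
        have h1 : q ^ h * (0 + q ^ h * (q + 1)) ≤ q ^ h * (3 * q ^ h + q ^ h * q) :=
          Nat.mul_le_mul_left _ hz
        rw [hNdef]
        omega
      · have hwq1 : qWeight q (q + 1) = 2 := by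
          have e : q + 1 = 1 + q ^ 1 * 1 := by rw [pow_one]; omega
          rw [e, wt_add_pow_mul hq2 1 1 (by rw [pow_one]; omega), hq1]
        rw [hNdef, wt_add_pow_mul hq2 h _ (by omega), wt_add_pow_mul hq2 h (q + 1) (by omega),
          hwq1, show qWeight q 0 = 0 from by simp [qWeight]]
    · -- positive case
      rcases lt_or_ge i ((q : ℤ) ^ h) with hsmall | hbig
      · -- 1 ≤ i < q^h
        set j : ℕ := i.toNat with hj
        have hji : i = (j : ℤ) := by omega
        have hjlt : j < q ^ h := by
          have h1 : (j : ℤ) < ((q ^ h : ℕ) : ℤ) := by push_cast; omega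
          exact_mod_cast h1
        set N : ℕ := j + q ^ h * (j + q ^ h * (q + 1)) with hNdef
        apply key N
        · rw [hb, ha, hm1, hm2, hji, hNdef]
          push_cast
          rw [show (2 * h + 1) = h + h + 1 by ring, show (2 * h) = h + h by ring]
          ring
        · have h0 : 0 < q ^ h * (j + q ^ h * (q + 1)) := by positivity
          omega
        · have hz : j + q ^ h * (q + 1) ≤ 3 * q ^ h + q ^ h * q := by
            have e : q ^ h * (q + 1) = q ^ h * q + q ^ h := by ring
            omega
          have h1 : q ^ h * (j + q ^ h * (q + 1)) ≤ q ^ h * (3 * q ^ h + q ^ h * q) :=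
            Nat.mul_le_mul_left _ hz
          rw [hNdef]
          omega
        · have hwq1 : qWeight q (q + 1) = 2 := by
            have e : q + 1 = 1 + q ^ 1 * 1 := by rw [pow_one]; omega
            rw [e, wt_add_pow_mul hq2 1 1 (by rw [pow_one]; omega), hq1]
          rw [hNdef, wt_add_pow_mul hq2 h _ hjlt, wt_add_pow_mul hq2 h (q + 1) hjlt, hwq1]
          omega
      · -- q^h ≤ i ≤ q^h + q - 2
        set r : ℕ := (i - (q : ℤ) ^ h).toNat with hr
        have hcast : ((q ^ h : ℕ) : ℤ) = (q : ℤ) ^ h := by push_cast; ring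
        have hri : i = ((q ^ h : ℕ) : ℤ) + (r : ℤ) := by
          rw [hcast, hr]
          omega
        have hrq : r ≤ q - 2 := by
          have h1 : (r : ℤ) ≤ (q : ℤ) - 2 := by rw [hr]; omega
          omega
        set N : ℕ := r + q ^ h * ((r + 1) + q ^ h * (q + 2)) with hNdef
        apply key N
        · rw [hb, ha, hm1, hm2, hri, hNdef]
          push_cast
          rw [show (2 * h + 1) = h + h + 1 by ring, show (2 * h) = h + h by ring]
          ring
        · have h0 : 0 < q ^ h * ((r + 1) + q ^ h * (q + 2)) := by positivity
          omega
        · have hz : (r + 1) + q ^ h * (q + 2) ≤ 3 * q ^ h + q ^ h * q := by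
            have e : q ^ h * (q + 2) = q ^ h * q + 2 * q ^ h := by ring
            omega
          have h1 : q ^ h * ((r + 1) + q ^ h * (q + 2)) ≤ q ^ h * (3 * q ^ h + q ^ h * q) :=
            Nat.mul_le_mul_left _ hz
          rw [hNdef]
          omega
        · have hr1 : r + 1 < q ^ h := by omega
          have hwq2 : qWeight q (q + 2) = 3 := by
            simpa using wt_two_digits hq2 (show q + 2 = 2 + q * 1 by ring) (by omega) (by omega)
          rw [hNdef, wt_add_pow_mul hq2 h _ (by omega), wt_add_pow_mul hq2 h (q + 2) hr1,
            hwq2, wt_lt hq2 (by omega : r < q), wt_lt hq2 (by omega : r + 1 < q)]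
          omega
end
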